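/- Under the assumption |R(κΔT)| + |e^{-κΔT} - R(κΔT)| < 1, the spectral radius of the periodic Parareal error iteration matrix S = L^{-1}B is bounded above by x_l for every l ≥ 1, where x_0 = 1 and x_l = (|R(κΔT)| x_{l-1} + |e^{-κΔT} - R(κΔT)|)^{N/(N+1)}. -/

import Mathlib

open Matrix Real


lemma key_real (a b : ℝ) (N : ℕ) (hN : 1 ≤ N) (ha : 0 ≤ a) (hb : 0 ≤ b)
    (hab : a + b < 1) (m : ℝ) (hm : 0 ≤ m)
    (hmain : m ^ (N + 1) ≤ (a * m + b) ^ N)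
    (x : ℕ → ℝ) (hx0 : x 0 = 1)
    (hx : ∀ l, x (l + 1) = (a * x l + b) ^ ((N : ℝ) / (N + 1))) :
    ∀ l, m ≤ x l := by
  have hm1 : m ≤ 1 := by
    by_contra h
    push_neg at h
    have h1 : a * m + b ≤ (a + b) * m := by nlinarith
    have h2 : (a + b) * m < m := by nlinarith
    have h3 : (a * m + b) ^ N < m ^ N :=
      pow_lt_pow_left₀ (lt_of_le_of_lt h1 h2) (by nlinarith) (by omega)
    have h4 : m ^ N ≤ m ^ (N + 1) := pow_le_pow_right₀ (le_of_lt h) (by omega)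
    linarith
  intro l
  induction l with
  | zero => rw [hx0]; exact hm1
  | succ l ih =>
    have hxl : 0 ≤ x l := le_trans hm ih
    have hbase : 0 ≤ a * x l + b := by positivity
    have h1 : m ^ (N + 1) ≤ (a * x l + b) ^ N := by
      refine le_trans hmain (pow_le_pow_left₀ (by positivity) ?_ N)
      nlinarith
    -- convert to rpow
    have hNpos : (0 : ℝ) < (N : ℝ) + 1 := by positivity
    have h2 : (m ^ (N + 1)) ^ ((1 : ℝ) / ((N : ℝ) + 1)) ≤
        ((a * x l + b) ^ N) ^ ((1 : ℝ) / ((N : ℝ) + 1)) :=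
      Real.rpow_le_rpow (by positivity) h1 (by positivity)
    have hL : (m ^ (N + 1)) ^ ((1 : ℝ) / ((N : ℝ) + 1)) = m := by
      rw [← Real.rpow_natCast m (N + 1), ← Real.rpow_mul hm]
      push_cast
      rw [mul_one_div, div_self (ne_of_gt hNpos), Real.rpow_one]
    have hR : ((a * x l + b) ^ N) ^ ((1 : ℝ) / ((N : ℝ) + 1)) = x (l + 1) := by
      rw [← Real.rpow_natCast (a * x l + b) N, ← Real.rpow_mul hbase, hx, mul_one_div]
    rw [hL, hR] at h2
    exact h2


lemma key_matrix (N : ℕ) (hN : 1 ≤ N) (r e : ℝ)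
    (Bc Lc : Matrix (Fin (N + 1)) (Fin (N + 1)) ℂ)
    (hB : ∀ i j, Bc i j =
      if i = 0 ∧ j = Fin.last N then 1
      else if (j : ℕ) + 1 = (i : ℕ) then ((e : ℂ) - r) else 0)
    (hL : ∀ i j, Lc i j =
      if i = j then 1 else if (j : ℕ) + 1 = (i : ℕ) then -(r : ℂ) else 0)
    (v : Fin (N + 1) → ℂ) (hv0 : v ≠ 0) (μ : ℂ)
    (hBv : Bc.mulVec v = μ • (Lc.mulVec v)) :
    ‖μ‖ ^ (N + 1) ≤ (|r| * ‖μ‖ + |e - r|) ^ N := by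
  have habs : ∀ t : ℝ, ‖(t : ℂ)‖ = |t| := fun t => by
    rw [Complex.norm_real, Real.norm_eq_abs]
  rcases eq_or_ne μ 0 with hμ0 | hμ0
  · subst hμ0
    simp only [norm_zero]
    rw [zero_pow (by omega)]
    positivity
  set c : ℂ := μ * (r : ℂ) + ((e : ℂ) - r) with hc
  -- row 0
  have hrow0 : v (Fin.last N) = μ * v 0 := by
    have h0 : Bc.mulVec v 0 = v (Fin.last N) := by
      simp only [Matrix.mulVec, dotProduct, hB]
      rw [Finset.sum_eq_single (Fin.last N)]
      · simp
      · intro j _ hj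
        have h1 : ¬((j : ℕ) + 1 = ((0 : Fin (N + 1)) : ℕ)) := by simp
        simp [hj, h1]
      · simp
    have h0' : Lc.mulVec v 0 = v 0 := by
      simp only [Matrix.mulVec, dotProduct, hL]
      rw [Finset.sum_eq_single (0 : Fin (N + 1))]
      · simp
      · intro j _ hj
        have h1 : ¬((0 : Fin (N + 1)) = j) := fun h => hj h.symm
        have h2 : ¬((j : ℕ) + 1 = ((0 : Fin (N + 1)) : ℕ)) := by simp
        simp [h1, h2]
      · simp
    have := congrFun hBv 0
    rw [h0] at this
    simpa [h0'] using this
  -- rows k+1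
  have hrow : ∀ (k : ℕ) (hk : k < N),
      μ * v ⟨k + 1, by omega⟩ = c * v ⟨k, by omega⟩ := by
    intro k hk
    set i : Fin (N + 1) := ⟨k + 1, by omega⟩ with hi
    set j0 : Fin (N + 1) := ⟨k, by omega⟩ with hj0
    have hij : i ≠ j0 := by simp [hi, hj0, Fin.ext_iff]
    have hi0 : i ≠ 0 := by simp [hi, Fin.ext_iff]
    have hBrow : Bc.mulVec v i = ((e : ℂ) - r) * v j0 := by
      simp only [Matrix.mulVec, dotProduct, hB]
      rw [Finset.sum_eq_single j0]
      · have hcond1 : ¬(i = 0 ∧ j0 = Fin.last N) := fun h => hi0 h.1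
        have hcond2 : (j0 : ℕ) + 1 = (i : ℕ) := rfl
        rw [if_neg hcond1, if_pos hcond2]
      · intro j _ hj
        have hcond1 : ¬(i = 0 ∧ j = Fin.last N) := fun h => hi0 h.1
        have hcond2 : ¬((j : ℕ) + 1 = (i : ℕ)) := by
          intro h
          apply hj
          apply Fin.ext
          have hiv : (i : ℕ) = k + 1 := rfl
          have hjv : (j0 : ℕ) = k := rfl
          omega
        simp [hcond1, hcond2]
      · simp
    have hLrow : Lc.mulVec v i = v i - (r : ℂ) * v j0 := by
      simp only [Matrix.mulVec, dotProduct]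
      have hsub : ∑ j, Lc i j * v j = ∑ j ∈ ({i, j0} : Finset (Fin (N + 1))), Lc i j * v j := by
        symm
        apply Finset.sum_subset (Finset.subset_univ _)
        intro j _ hj
        simp only [Finset.mem_insert, Finset.mem_singleton, not_or] at hj
        have h1 : ¬(i = j) := fun h => hj.1 h.symm
        have h2 : ¬((j : ℕ) + 1 = (i : ℕ)) := by
          intro h
          apply hj.2
          apply Fin.ext
          have hiv : (i : ℕ) = k + 1 := rfl
          have hjv : (j0 : ℕ) = k := rfl
          omega
        simp [hL, h1, h2]
      rw [hsub, Finset.sum_pair hij]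
      have e1 : Lc i i = 1 := by simp [hL]
      have e2 : Lc i j0 = -(r : ℂ) := by
        have hij' : ¬(i = j0) := hij
        have h3 : (j0 : ℕ) + 1 = (i : ℕ) := rfl
        rw [hL, if_neg hij', if_pos h3]
      rw [e1, e2]; ring
    have := congrFun hBv i
    rw [hBrow] at this
    simp only [Pi.smul_apply, smul_eq_mul, hLrow] at this
    have : μ * v i = μ * ((r : ℂ) * v j0) + ((e : ℂ) - r) * v j0 := by linear_combination -this
    rw [this, hc]; ring
  -- sequence u
  set u : ℕ → ℂ := fun k => if h : k < N + 1 then v ⟨k, h⟩ else 0 with hu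
  have hun : ∀ (k : ℕ) (h : k < N + 1), u k = v ⟨k, h⟩ := by
    intro k h; simp [hu, h, Nat.lt_succ_iff.mp h]
  have hind : ∀ k, k ≤ N → μ ^ k * u k = c ^ k * u 0 := by
    intro k
    induction k with
    | zero => simp
    | succ k ih =>
      intro hk
      have hk' : k ≤ N := by omega
      have h1 : μ * u (k + 1) = c * u k := by
        rw [hun (k + 1) (by omega), hun k (by omega)]
        exact hrow k (by omega)
      calc μ ^ (k + 1) * u (k + 1) = μ ^ k * (μ * u (k + 1)) := by ring
        _ = μ ^ k * (c * u k) := by rw [h1]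
        _ = c * (μ ^ k * u k) := by ring
        _ = c * (c ^ k * u 0) := by rw [ih hk']
        _ = c ^ (k + 1) * u 0 := by ring
  have hlast : u N = μ * u 0 := by
    rw [hun N (by omega), hun 0 (by omega)]
    have : (Fin.last N) = (⟨N, by omega⟩ : Fin (N + 1)) := rfl
    rw [← this, hrow0]
    congr 1
  have hkey : μ ^ (N + 1) * u 0 = c ^ N * u 0 := by
    have := hind N le_rfl
    rw [hlast] at this
    calc μ ^ (N + 1) * u 0 = μ ^ N * (μ * u 0) := by ring
      _ = c ^ N * u 0 := this
  have hu0 : u 0 ≠ 0 := by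
    intro h
    apply hv0
    funext i
    have hi : (i : ℕ) ≤ N := by omega
    have := hind i hi
    rw [h, mul_zero] at this
    have hμk : μ ^ (i : ℕ) ≠ 0 := pow_ne_zero _ hμ0
    have hvz : u (i : ℕ) = 0 := by
      rcases mul_eq_zero.mp this with h' | h'
      · exact absurd h' hμk
      · exact h'
    rw [hun (i : ℕ) i.isLt] at hvz
    have hieta : (⟨(i : ℕ), i.isLt⟩ : Fin (N + 1)) = i := Fin.eta i i.isLt
    rw [hieta] at hvz
    simp only [Pi.zero_apply]
    exact hvz
  have heq : μ ^ (N + 1) = c ^ N := mul_right_cancel₀ hu0 hkey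
  have hnorm : ‖μ‖ ^ (N + 1) = ‖c‖ ^ N := by
    rw [← norm_pow, ← norm_pow, heq]
  rw [hnorm]
  have hcle : ‖c‖ ≤ |r| * ‖μ‖ + |e - r| := by
    calc ‖c‖ ≤ ‖μ * (r : ℂ)‖ + ‖((e : ℂ) - r)‖ := norm_add_le _ _
      _ = ‖μ‖ * |r| + |e - r| := by
          rw [norm_mul, habs]
          congr 1
          rw [← Complex.ofReal_sub, habs]
      _ = |r| * ‖μ‖ + |e - r| := by ring
  exact pow_le_pow_left₀ (norm_nonneg _) hcle N

/-- Convergence estimate of the new periodic Parareal algorithm: under the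
contraction assumption `|R(κΔT)| + |e^{-κΔT} - R(κΔT)| < 1`, the spectral
radius of the error iteration matrix `S = L⁻¹ B` is bounded above by `x_l`
for every `l ≥ 1`, where `x_0 = 1` and
`x_l = (|R(κΔT)| x_{l-1} + |e^{-κΔT} - R(κΔT)|)^{N/(N+1)}`. -/
theorem stmt_4 (N : ℕ) (hN : 1 ≤ N) (κ T ΔT : ℝ) (hκ : 0 < κ) (hT : 0 < T)
    (hΔT : ΔT = T / N) (R : ℝ → ℝ)
    (hcond : |R (κ * ΔT)| + |Real.exp (-(κ * ΔT)) - R (κ * ΔT)| < 1)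
    (L B S : Matrix (Fin (N + 1)) (Fin (N + 1)) ℝ)
    (hL : ∀ i j, L i j =
      if i = j then 1 else if (j : ℕ) + 1 = (i : ℕ) then -(R (κ * ΔT)) else 0)
    (hB : ∀ i j, B i j =
      if i = 0 ∧ j = Fin.last N then 1
      else if (j : ℕ) + 1 = (i : ℕ) then Real.exp (-(κ * ΔT)) - R (κ * ΔT) else 0)
    (hS : S = L⁻¹ * B)
    (x : ℕ → ℝ) (hx0 : x 0 = 1)
    (hx : ∀ l, x (l + 1) =
      (|R (κ * ΔT)| * x l + |Real.exp (-(κ * ΔT)) - R (κ * ΔT)|) ^ ((N : ℝ) / (N + 1))) :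
    ∀ l, 1 ≤ l → ∀ μ ∈ spectrum ℂ (S.map (algebraMap ℝ ℂ)), ‖μ‖ ≤ x l := by
  intro l _ μ hμ
  subst hS
  set r := R (κ * ΔT) with hr
  set e := Real.exp (-(κ * ΔT)) with he
  -- L is lower triangular with det 1
  have hLdet : L.det = 1 := by
    have htri : L.BlockTriangular OrderDual.toDual := by
      intro i j hij
      rw [hL]
      have h1 : ¬ i = j := by intro h; subst h; exact lt_irrefl _ hij
      have h2 : ¬ ((j : ℕ) + 1 = (i : ℕ)) := by
        have : (i : ℕ) < (j : ℕ) := hij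
        omega
      simp [h1, h2]
    rw [Matrix.det_of_lowerTriangular L htri]
    apply Finset.prod_eq_one
    intro i _
    simp [hL]
  have hLunit : IsUnit L.det := by rw [hLdet]; exact isUnit_one
  have hLS : L * (L⁻¹ * B) = B := by
    rw [← mul_assoc, Matrix.mul_nonsing_inv L hLunit, one_mul]
  set f := algebraMap ℝ ℂ with hf
  set Sc := (L⁻¹ * B).map f with hSc
  set Lc := L.map f with hLc
  set Bc := B.map f with hBc
  have hLSc : Lc * Sc = Bc := by
    rw [hLc, hSc, hBc, ← Matrix.map_mul, hLS]
  -- eigenvector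
  obtain ⟨v, hv0, hvS⟩ : ∃ v ≠ 0, Sc.mulVec v = μ • v := by
    rw [spectrum.mem_iff] at hμ
    have hdet : ((algebraMap ℂ (Matrix (Fin (N+1)) (Fin (N+1)) ℂ)) μ - Sc).det = 0 := by
      by_contra h
      exact hμ ((Matrix.isUnit_iff_isUnit_det _).mpr (isUnit_iff_ne_zero.mpr h))
    obtain ⟨v, hv0, hv⟩ := (Matrix.exists_mulVec_eq_zero_iff).mpr hdet
    refine ⟨v, hv0, ?_⟩
    have hsc : (algebraMap ℂ (Matrix (Fin (N+1)) (Fin (N+1)) ℂ)) μ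
        = μ • (1 : Matrix _ _ ℂ) := by
      simp [Algebra.algebraMap_eq_smul_one]
    rw [hsc, Matrix.sub_mulVec, Matrix.smul_mulVec, Matrix.one_mulVec,
      sub_eq_zero] at hv
    exact hv.symm
  have hBv : Bc.mulVec v = μ • (Lc.mulVec v) := by
    rw [← hLSc, ← Matrix.mulVec_mulVec, hvS, Matrix.mulVec_smul]
  -- entrywise formulas for the complex matrices
  have hBc' : ∀ i j, Bc i j =
      if i = 0 ∧ j = Fin.last N then 1
      else if (j : ℕ) + 1 = (i : ℕ) then ((e : ℂ) - r) else 0 := by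
    intro i j
    rw [hBc, Matrix.map_apply, hB i j]
    split_ifs <;> simp [hf]
  have hLc' : ∀ i j, Lc i j =
      if i = j then 1 else if (j : ℕ) + 1 = (i : ℕ) then -(r : ℂ) else 0 := by
    intro i j
    rw [hLc, Matrix.map_apply, hL i j]
    split_ifs <;> simp [hf]
  have hmain : ‖μ‖ ^ (N + 1) ≤ (|r| * ‖μ‖ + |e - r|) ^ N :=
    key_matrix N hN r e Bc Lc hBc' hLc' v hv0 μ hBv
  exact key_real |r| |e - r| N hN (abs_nonneg _) (abs_nonneg _) hcond ‖μ‖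
    (norm_nonneg _) hmain x hx0 hx l
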